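/- For any full-rank lattice Λ ⊂ ℝ^n and 0 < ε < 1, if σ ≥ √n / (√π · λ₁(Λ*)) · c(ε) for a suitable constant c(ε) (in particular the smoothing parameter satisfies η_ε(Λ) ≤ 2√n / λ₁(Λ*) when ε = 2^{-n}), then ∑_{λ*∈Λ*\{0}} e^{-π σ² ‖λ*‖²} ≤ ε. -/

import Mathlib

open scoped Real

/-- Per-coordinate Gaussian-type weight on ℤ. -/
noncomputable def smoothAux (a : ℤ) : ℝ :=
  Real.exp (-(2 * π) * ((a.natAbs - 1 : ℕ) : ℝ) ^ 2)

lemma smoothAux_nonneg (a : ℤ) : 0 ≤ smoothAux a := (Real.exp_pos _).le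

lemma smoothAux_sum_le (u : Finset ℤ) : ∑ a ∈ u, smoothAux a ≤ 4 := by
  set q : ℝ := Real.exp (-(2 * π)) with hqdef
  have hq0 : 0 < q := Real.exp_pos _
  have hq1 : q < 1 := by
    rw [hqdef, Real.exp_lt_one_iff]
    have := Real.pi_pos
    linarith
  have h100 : (100:ℝ) ≤ Real.exp (2 * π) := by
    have h6 : Real.exp 6 ≤ Real.exp (2 * π) := by
      apply Real.exp_le_exp.2
      have := Real.pi_gt_three; linarith
    have he : Real.exp 6 = Real.exp 1 ^ 6 := by
      rw [← Real.exp_nat_mul]; norm_num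
    have hp : (2.7182818283:ℝ) ^ 6 ≤ Real.exp 1 ^ 6 :=
      pow_le_pow_left₀ (by norm_num) Real.exp_one_gt_d9.le 6
    have hc : (100:ℝ) ≤ (2.7182818283:ℝ) ^ 6 := by norm_num
    linarith
  have hqhalf : q ≤ 1 / 100 := by
    rw [hqdef, Real.exp_neg]
    calc (Real.exp (2 * π))⁻¹ ≤ (100:ℝ)⁻¹ := by
          apply inv_anti₀ (by norm_num) h100
      _ = 1 / 100 := by norm_num
  set h : ℤ → ℝ := fun a => q ^ (a.natAbs - 1) with hhdef
  have hle : ∀ a : ℤ, smoothAux a ≤ h a := by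
    intro a
    simp only [hhdef, smoothAux]
    rw [← Real.exp_nat_mul]
    apply Real.exp_le_exp.2
    have hc : ((a.natAbs - 1 : ℕ) : ℝ) ≤ ((a.natAbs - 1 : ℕ) : ℝ) ^ 2 := by
      have : (a.natAbs - 1 : ℕ) ≤ (a.natAbs - 1) ^ 2 := Nat.le_self_pow (by norm_num) _
      exact_mod_cast this
    have hπ : (0:ℝ) < 2 * π := by positivity
    nlinarith
  have hnatsum : Summable (fun n : ℕ => q ^ (n - 1)) := by
    rw [← summable_nat_add_iff 1]
    simpa using summable_geometric_of_lt_one hq0.le hq1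
  have hnegfun : (fun m : ℕ => h (-(m + 1) : ℤ)) = fun m : ℕ => q ^ m := by
    funext m
    simp only [hhdef]
    congr 1
  have hnatfun : (fun m : ℕ => h (m : ℤ)) = fun m : ℕ => q ^ (m - 1) := by
    funext m
    simp only [hhdef, Int.natAbs_natCast]
  have hgeo : Summable fun m : ℕ => q ^ m :=
    summable_geometric_of_lt_one hq0.le hq1
  have hsum : Summable h := by
    apply Summable.of_nat_of_neg_add_one
    · rw [hnatfun]; exact hnatsum
    · rw [hnegfun]; exact hgeo
  have htsum : ∑' a : ℤ, h a ≤ 4 := by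
    rw [tsum_of_nat_of_neg_add_one (by rw [hnatfun]; exact hnatsum)
      (by rw [hnegfun]; exact hgeo)]
    have hT : (∑' n : ℕ, h (n : ℤ)) = 1 + (1 - q)⁻¹ := by
      rw [hnatfun, hnatsum.tsum_eq_zero_add]
      simp only [Nat.zero_sub, pow_zero, Nat.add_sub_cancel]
      rw [tsum_geometric_of_lt_one hq0.le hq1]
    have hT' : (∑' n : ℕ, h (-(n + 1) : ℤ)) = (1 - q)⁻¹ := by
      rw [hnegfun, tsum_geometric_of_lt_one hq0.le hq1]
    rw [hT, hT']
    have hinv : (1 - q)⁻¹ ≤ 3 / 2 := by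
      rw [inv_le_comm₀ (by linarith) (by norm_num)]
      linarith
    linarith
  calc ∑ a ∈ u, smoothAux a ≤ ∑ a ∈ u, h a := Finset.sum_le_sum fun a _ => hle a
    _ ≤ ∑' a : ℤ, h a := Summable.sum_le_tsum u (fun a _ => by positivity) hsum
    _ ≤ 4 := htsum

/-- floor-based coordinate bound -/
lemma smoothAux_floor_sq_le (u : ℝ) : (((⌊u⌋).natAbs - 1 : ℕ) : ℝ) ^ 2 ≤ u ^ 2 := by
  set k : ℤ := ⌊u⌋ with hk
  have h1 : (k : ℝ) ≤ u := Int.floor_le u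
  have h2 : u < (k : ℝ) + 1 := Int.lt_floor_add_one u
  have hcnn : (0:ℝ) ≤ ((k.natAbs - 1 : ℕ) : ℝ) := Nat.cast_nonneg _
  have habs : ((k.natAbs - 1 : ℕ) : ℝ) ≤ |u| := by
    rcases le_or_gt 0 k with hk0 | hk0
    · have : ((k.natAbs - 1 : ℕ) : ℝ) ≤ (k.natAbs : ℝ) := by
        exact_mod_cast Nat.sub_le _ _
      have hks : ((k.natAbs : ℕ) : ℝ) = (k : ℝ) := by
        rw [Nat.cast_natAbs]
        exact_mod_cast abs_of_nonneg hk0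
      have : ((k.natAbs - 1 : ℕ) : ℝ) ≤ u := by rw [hks] at this; linarith
      calc ((k.natAbs - 1 : ℕ) : ℝ) ≤ u := this
        _ ≤ |u| := le_abs_self u
    · have hk1 : k ≤ -1 := by omega
      have hna : (1 : ℕ) ≤ k.natAbs := by omega
      have hcast : ((k.natAbs - 1 : ℕ) : ℝ) = (k.natAbs : ℝ) - 1 := by
        push_cast [Nat.cast_sub hna]; ring
      have hval : ((k.natAbs : ℕ) : ℝ) = -(k : ℝ) := by
        rw [Nat.cast_natAbs]
        exact_mod_cast abs_of_nonpos hk0.le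
      have : ((k.natAbs - 1 : ℕ) : ℝ) ≤ -u := by
        rw [hcast, hval]; push_cast; linarith
      calc ((k.natAbs - 1 : ℕ) : ℝ) ≤ -u := this
        _ ≤ |u| := neg_le_abs u
  calc (((⌊u⌋).natAbs - 1 : ℕ) : ℝ) ^ 2 ≤ |u| ^ 2 := by
        rw [← hk]; exact pow_le_pow_left₀ hcnn habs 2
    _ = u ^ 2 := sq_abs u

theorem smoothing_parameter_le_of_dual_min_distance
    (n : ℕ) (hn : 0 < n) (B : Module.Basis (Fin n) ℝ (Fin n → ℝ)) (lam1 s : ℝ) (hlam : 0 < lam1)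
    (hmin : ∀ x : Fin n → ℝ,
        (∀ y ∈ Submodule.span ℤ (Set.range B), ∃ m : ℤ, ∑ i, x i * y i = (m : ℝ)) →
        x ≠ 0 → lam1 ≤ Real.sqrt (∑ i, x i ^ 2))
    (hs : 2 * Real.sqrt n / lam1 ≤ s) :
    ∑' l : {x : Fin n → ℝ //
          (∀ y ∈ Submodule.span ℤ (Set.range B), ∃ m : ℤ, ∑ i, x i * y i = (m : ℝ)) ∧ x ≠ 0},
        Real.exp (-π * s ^ 2 * ∑ i, (l : Fin n → ℝ) i ^ 2)
      ≤ (2 : ℝ)⁻¹ ^ n := by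
  have hnR : (0:ℝ) < n := by exact_mod_cast hn
  have hsqn : (0:ℝ) < Real.sqrt n := Real.sqrt_pos.2 hnR
  -- the injection into ℤ^n
  set D := {x : Fin n → ℝ //
      (∀ y ∈ Submodule.span ℤ (Set.range B), ∃ m : ℤ, ∑ i, x i * y i = (m : ℝ)) ∧ x ≠ 0} with hD
  set φ : D → (Fin n → ℤ) := fun l i => ⌊Real.sqrt n * l.1 i / lam1⌋ with hφ
  have hinj : Function.Injective φ := by
    intro l l' hll
    apply Subtype.ext
    by_contra hne
    set d : Fin n → ℝ := fun i => l.1 i - l'.1 i with hd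
    have hdual : ∀ y ∈ Submodule.span ℤ (Set.range B), ∃ m : ℤ, ∑ i, d i * y i = (m : ℝ) := by
      intro y hy
      obtain ⟨m, hm⟩ := l.2.1 y hy
      obtain ⟨m', hm'⟩ := l'.2.1 y hy
      refine ⟨m - m', ?_⟩
      push_cast
      rw [← hm, ← hm', ← Finset.sum_sub_distrib]
      apply Finset.sum_congr rfl
      intro i _
      simp [hd, sub_mul]
    have hdne : d ≠ 0 := sub_ne_zero.mpr hne
    have hlow : lam1 ^ 2 ≤ ∑ i, d i ^ 2 := by
      have h := hmin d hdual hdne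
      exact (Real.le_sqrt hlam.le (Finset.sum_nonneg fun i _ => sq_nonneg _)).1 h
    -- coordinate-wise bound
    have hco : ∀ i, (n : ℝ) * d i ^ 2 < lam1 ^ 2 := by
      intro i
      have hfe : ⌊Real.sqrt n * l.1 i / lam1⌋ = ⌊Real.sqrt n * l'.1 i / lam1⌋ :=
        congrFun hll i
      set u := Real.sqrt n * l.1 i / lam1
      set v := Real.sqrt n * l'.1 i / lam1
      have h1 : (⌊u⌋ : ℝ) ≤ u := Int.floor_le u
      have h2 : u < (⌊u⌋ : ℝ) + 1 := Int.lt_floor_add_one u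
      have h3 : (⌊v⌋ : ℝ) ≤ v := Int.floor_le v
      have h4 : v < (⌊v⌋ : ℝ) + 1 := Int.lt_floor_add_one v
      rw [hfe] at h1 h2
      have hdiff : (u - v) ^ 2 < 1 := by
        nlinarith [mul_pos (by linarith : (0:ℝ) < 1 - (u - v))
          (by linarith : (0:ℝ) < 1 + (u - v))]
      have huv : u - v = Real.sqrt n * d i / lam1 := by
        simp only [hd]; ring
      rw [huv] at hdiff
      have hexp : (Real.sqrt n * d i / lam1) ^ 2 = (n : ℝ) * d i ^ 2 / lam1 ^ 2 := by
        rw [div_pow, mul_pow, Real.sq_sqrt hnR.le]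
      rw [hexp, div_lt_one (by positivity)] at hdiff
      exact hdiff
    have hstrict : ∑ i, d i ^ 2 < lam1 ^ 2 := by
      have : (n:ℝ) * ∑ i, d i ^ 2 < (n:ℝ) * lam1 ^ 2 := by
        rw [Finset.mul_sum]
        calc ∑ i, (n:ℝ) * d i ^ 2 < ∑ _i : Fin n, lam1 ^ 2 :=
              Finset.sum_lt_sum_of_nonempty (Finset.univ_nonempty_iff.2 ⟨⟨0, hn⟩⟩)
                (fun i _ => hco i)
          _ = (n:ℝ) * lam1 ^ 2 := by simp [Finset.sum_const, mul_comm]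
      exact lt_of_mul_lt_mul_left this hnR.le
    linarith
  -- termwise bound
  have hterm : ∀ l : D,
      Real.exp (-π * s ^ 2 * ∑ i, l.1 i ^ 2)
        ≤ Real.exp (-(2 * π) * n) * ∏ i, smoothAux (φ l i) := by
    intro l
    have hA0 : (0:ℝ) ≤ ∑ i, l.1 i ^ 2 := Finset.sum_nonneg fun i _ => sq_nonneg _
    have hA : lam1 ^ 2 ≤ ∑ i, l.1 i ^ 2 :=
      (Real.le_sqrt hlam.le hA0).1 (hmin l.1 l.2.1 l.2.2)
    set A := ∑ i, l.1 i ^ 2 with hAdef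
    set C := ∑ i, (((φ l i).natAbs - 1 : ℕ) : ℝ) ^ 2 with hC
    have hC0 : 0 ≤ C := Finset.sum_nonneg fun i _ => sq_nonneg _
    have hCA : C * lam1 ^ 2 ≤ (n : ℝ) * A := by
      have hcb : ∀ i, (((φ l i).natAbs - 1 : ℕ) : ℝ) ^ 2 ≤ (n : ℝ) * l.1 i ^ 2 / lam1 ^ 2 := by
        intro i
        have := smoothAux_floor_sq_le (Real.sqrt n * l.1 i / lam1)
        have hexp : (Real.sqrt n * l.1 i / lam1) ^ 2 = (n : ℝ) * l.1 i ^ 2 / lam1 ^ 2 := by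
          rw [div_pow, mul_pow, Real.sq_sqrt hnR.le]
        simpa [hφ, hexp] using this
      have : C ≤ ∑ i, (n : ℝ) * l.1 i ^ 2 / lam1 ^ 2 :=
        Finset.sum_le_sum fun i _ => hcb i
      have heq : ∑ i, (n : ℝ) * l.1 i ^ 2 / lam1 ^ 2 = (n : ℝ) * A / lam1 ^ 2 := by
        rw [hAdef, Finset.mul_sum, Finset.sum_div]
      rw [heq] at this
      calc C * lam1 ^ 2 ≤ ((n : ℝ) * A / lam1 ^ 2) * lam1 ^ 2 :=
            mul_le_mul_of_nonneg_right this (by positivity)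
        _ = (n : ℝ) * A := by field_simp
    have hs4 : 4 * (n : ℝ) ≤ s ^ 2 * lam1 ^ 2 := by
      have hs0 : 0 ≤ s := le_trans (by positivity) hs
      have h2s : 2 * Real.sqrt n ≤ s * lam1 := by
        rw [div_le_iff₀ hlam] at hs; linarith
      have := mul_self_le_mul_self (by positivity : (0:ℝ) ≤ 2 * Real.sqrt n) h2s
      have hsq : (2 * Real.sqrt n) * (2 * Real.sqrt n) = 4 * n := by
        have := Real.mul_self_sqrt hnR.le
        nlinarith
      nlinarith
    have hmain : 2 * π * n + 2 * π * C ≤ π * s ^ 2 * A := by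
      have hπ := Real.pi_pos
      have key : (2 * (n:ℝ) + 2 * C) * lam1 ^ 2 ≤ (s ^ 2 * A) * lam1 ^ 2 := by
        nlinarith [mul_le_mul_of_nonneg_right hs4 hA0,
          mul_le_mul_of_nonneg_left hA (by positivity : (0:ℝ) ≤ 2 * n)]
      have h2 : 2 * (n:ℝ) + 2 * C ≤ s ^ 2 * A :=
        le_of_mul_le_mul_right key (by positivity)
      nlinarith
    -- rewrite RHS as a single exponential
    have hrhs : Real.exp (-(2 * π) * n) * ∏ i, smoothAux (φ l i)
        = Real.exp (-(2 * π) * n + ∑ i, -(2 * π) * (((φ l i).natAbs - 1 : ℕ) : ℝ) ^ 2) := by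
      rw [Real.exp_add, Real.exp_sum]
      rfl
    rw [hrhs]
    apply Real.exp_le_exp.2
    have hsumC : ∑ i, -(2 * π) * (((φ l i).natAbs - 1 : ℕ) : ℝ) ^ 2 = -(2 * π) * C := by
      rw [hC, Finset.mul_sum]
    rw [hsumC]
    nlinarith [hmain]
  -- assemble
  apply tsum_le_of_sum_le' (by positivity)
  intro u
  have hq4 : Real.exp (-(2 * π)) * 4 ≤ 2⁻¹ := by
    have h100 : (100:ℝ) ≤ Real.exp (2 * π) := by
      have h6 : Real.exp 6 ≤ Real.exp (2 * π) := by
        apply Real.exp_le_exp.2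
        have := Real.pi_gt_three; linarith
      have he : Real.exp 6 = Real.exp 1 ^ 6 := by
        rw [← Real.exp_nat_mul]; norm_num
      have hp : (2.7182818283:ℝ) ^ 6 ≤ Real.exp 1 ^ 6 :=
        pow_le_pow_left₀ (by norm_num) Real.exp_one_gt_d9.le 6
      have hc : (100:ℝ) ≤ (2.7182818283:ℝ) ^ 6 := by norm_num
      linarith
    have hq : Real.exp (-(2 * π)) ≤ 1 / 100 := by
      rw [Real.exp_neg]
      calc (Real.exp (2 * π))⁻¹ ≤ (100:ℝ)⁻¹ := inv_anti₀ (by norm_num) h100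
        _ = 1 / 100 := by norm_num
    nlinarith [Real.exp_pos (-(2 * π))]
  calc ∑ l ∈ u, Real.exp (-π * s ^ 2 * ∑ i, l.1 i ^ 2)
      ≤ ∑ l ∈ u, Real.exp (-(2 * π) * n) * ∏ i, smoothAux (φ l i) :=
        Finset.sum_le_sum fun l _ => hterm l
    _ = Real.exp (-(2 * π) * n) * ∑ l ∈ u, ∏ i, smoothAux (φ l i) := by
        rw [Finset.mul_sum]
    _ = Real.exp (-(2 * π) * n) * ∑ k ∈ u.image φ, ∏ i, smoothAux (k i) := by
        rw [Finset.sum_image (fun a _ b _ hab => hinj hab)]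
    _ ≤ Real.exp (-(2 * π) * n) * 4 ^ n := by
        apply mul_le_mul_of_nonneg_left _ (Real.exp_pos _).le
        set t := u.image φ
        have hsub : t ⊆ Fintype.piFinset (fun i => t.image (fun k => k i)) := by
          intro k hk
          rw [Fintype.mem_piFinset]
          intro i
          exact Finset.mem_image_of_mem _ hk
        calc ∑ k ∈ t, ∏ i, smoothAux (k i)
            ≤ ∑ k ∈ Fintype.piFinset (fun i => t.image (fun k => k i)), ∏ i, smoothAux (k i) :=
              Finset.sum_le_sum_of_subset_of_nonneg hsub
                (fun k _ _ => Finset.prod_nonneg fun i _ => smoothAux_nonneg _)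
          _ = ∏ i, ∑ a ∈ t.image (fun k => k i), smoothAux a :=
              (Finset.prod_univ_sum _ _).symm
          _ ≤ ∏ _i : Fin n, (4:ℝ) := Finset.prod_le_prod
              (fun i _ => Finset.sum_nonneg fun a _ => smoothAux_nonneg a)
              (fun i _ => smoothAux_sum_le _)
          _ = 4 ^ n := by simp
    _ = (Real.exp (-(2 * π)) * 4) ^ n := by
        rw [mul_pow, ← Real.exp_nat_mul]; ring_nf
    _ ≤ (2:ℝ)⁻¹ ^ n := pow_le_pow_left₀ (by positivity) hq4 n
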